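/- arXiv:2103.02426 — 2 statements merged into one kernel-verified Lean document; each statement's English description precedes it below -/
import Mathlib

section
/- Let F be an algebraically closed field of prime characteristic p, let D be a finite p-group, let A be a finite-dimensional unital associative F-algebra, let σ : D → A^× be a group homomorphism, and let Ω be a D×D-stable basis of A that is bifree, i.e., for all w ∈ Ω and f, g ∈ D, σ(f) w = w implies f = 1 and w σ(g) = w implies g = 1. Then the following are equivalent: (a) for all subgroups P, Q of D and every group isomorphism φ : Q → P such that some w ∈ Ω satisfies σ(φ(q)) w σ(q)⁻¹ = w for all q ∈ Q, there exists a unit u ∈ A^× with σ(φ(q)) u = u σ(q) for all q ∈ Q; (b) A has a unital D×D-stable basis. -/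
open Finset

private lemma mypsum {p : ℕ} [Fact p.Prime] {F : Type*} [Field F] [CharP F p]
    {G : Type*} [Group G] [Finite G] (hG : IsPGroup p G)
    {X : Type*} [DecidableEq X] (π : G →* Equiv.Perm X) (f : X → F) :
    ∀ S : Finset X, (∀ g : G, ∀ x ∈ S, π g x ∈ S) →
      (∀ g : G, ∀ x ∈ S, f (π g x) = f x) →
      (∀ x ∈ S, ∃ g : G, π g x ≠ x) → ∑ x ∈ S, f x = 0 := by
  classical
  letI : Fintype G := Fintype.ofFinite G
  intro S
  induction S using Finset.strongInduction with
  | _ S ih =>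
    intro hcl hinv hnf
    rcases S.eq_empty_or_nonempty with rfl | ⟨x₀, hx₀⟩
    · simp
    · set O : Finset X := Finset.univ.image (fun g : G => π g x₀) with hO
      have hOS : O ⊆ S := by
        intro y hy
        rcases Finset.mem_image.mp hy with ⟨g, _, rfl⟩
        exact hcl g x₀ hx₀
      have hx₀O : x₀ ∈ O := Finset.mem_image.mpr ⟨1, Finset.mem_univ _, by simp⟩
      letI : MulAction G X := MulAction.compHom X π
      have hsetO : MulAction.orbit G x₀ = (O : Set X) := by
        ext y
        simp only [MulAction.mem_orbit_iff, hO, Finset.coe_image, Set.mem_image,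
          Finset.mem_coe, Finset.coe_univ, Set.image_univ, Set.mem_range]
        exact Iff.rfl
      have hdvdG : O.card ∣ Nat.card G := by
        have h1 : Nat.card (MulAction.orbit G x₀) = O.card := by
          rw [Nat.card_coe_set_eq, hsetO, Set.ncard_coe_finset]
        have h2 : Nat.card (MulAction.orbit G x₀) =
            Nat.card (G ⧸ MulAction.stabilizer G x₀) :=
          Nat.card_congr (MulAction.orbitEquivQuotientStabilizer G x₀)
        rw [← h1, h2]
        exact Subgroup.card_quotient_dvd_card _
      have hpdvd : p ∣ O.card := by
        obtain ⟨n, hn⟩ := (IsPGroup.iff_card).mp hG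
        obtain ⟨k, hk, hOk⟩ := (Nat.dvd_prime_pow Fact.out).mp (hn ▸ hdvdG)
        rcases Nat.eq_zero_or_pos k with rfl | hkpos
        · exfalso
          have hO1 : O.card = 1 := by simpa using hOk
          obtain ⟨a, ha⟩ := Finset.card_eq_one.mp hO1
          have hax : a = x₀ := by
            have h := hx₀O; rw [ha, Finset.mem_singleton] at h; exact h.symm
          obtain ⟨g, hg⟩ := hnf x₀ hx₀
          apply hg
          have hmem : π g x₀ ∈ O := Finset.mem_image.mpr ⟨g, Finset.mem_univ _, rfl⟩
          rw [ha, hax, Finset.mem_singleton] at hmem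
          exact hmem
        · rw [hOk]
          exact dvd_pow_self p hkpos.ne'
      have hsumO : ∑ x ∈ O, f x = 0 := by
        have h1 : ∀ x ∈ O, f x = f x₀ := by
          intro x hx
          rcases Finset.mem_image.mp hx with ⟨g, _, rfl⟩
          exact hinv g x₀ hx₀
        rw [Finset.sum_congr rfl h1, Finset.sum_const, nsmul_eq_mul,
          (CharP.cast_eq_zero_iff F p _).mpr hpdvd, zero_mul]
      have hOclosed : ∀ (g : G), ∀ y ∈ O, π g y ∈ O := by
        intro g y hy
        rcases Finset.mem_image.mp hy with ⟨h, _, rfl⟩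
        refine Finset.mem_image.mpr ⟨g * h, Finset.mem_univ _, ?_⟩
        rw [map_mul]; rfl
      have hSO : ∀ (g : G), ∀ x ∈ S \ O, π g x ∈ S \ O := by
        intro g x hx
        rw [Finset.mem_sdiff] at hx ⊢
        refine ⟨hcl g x hx.1, fun hmem => hx.2 ?_⟩
        have h2 := hOclosed g⁻¹ _ hmem
        have h3 : π g⁻¹ (π g x) = x := by
          rw [← Equiv.Perm.mul_apply, ← map_mul, inv_mul_cancel, map_one, Equiv.Perm.one_apply]
        rwa [h3] at h2
      have hssub : S \ O ⊂ S := by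
        apply Finset.sdiff_ssubset hOS ⟨x₀, hx₀O⟩
      have hih := ih (S \ O) hssub hSO
        (fun g x hx => hinv g x (Finset.mem_sdiff.mp hx).1)
        (fun x hx => hnf x (Finset.mem_sdiff.mp hx).1)
      rw [← Finset.sum_sdiff hOS, hih, hsumO, add_zero]

private lemma myrepr_perm {F : Type*} [Field F] {A : Type*} [AddCommGroup A] [Module F A]
    {ι : Type*} (b : Module.Basis ι F A) (e : A ≃ₗ[F] A) (π : ι ≃ ι)
    (h : ∀ i, e (b i) = b (π i)) (a : A) (i : ι) :
    b.repr (e a) (π i) = b.repr a i := by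
  have key : ((Finsupp.lapply (π i) : (ι →₀ F) →ₗ[F] F).comp
        ((b.repr.toLinearMap).comp e.toLinearMap))
      = (Finsupp.lapply i : (ι →₀ F) →ₗ[F] F).comp b.repr.toLinearMap := by
    apply b.ext
    intro j
    classical
    simp only [LinearMap.comp_apply, LinearEquiv.coe_toLinearMap, h j, Module.Basis.repr_self,
      Finsupp.lapply_apply]
    rw [Finsupp.single_apply, Finsupp.single_apply]
    simp [EmbeddingLike.apply_eq_iff_eq]
  exact LinearMap.congr_fun key a

/-- two-sided multiplication by units as a linear equiv -/
private def mulUnits {F : Type*} [Field F] {A : Type*} [Ring A] [Algebra F A]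
    (u v : Aˣ) : A ≃ₗ[F] A where
  toFun a := u * a * v
  map_add' x y := by simp [mul_add, add_mul]
  map_smul' c x := by simp [Algebra.mul_smul_comm, Algebra.smul_mul_assoc]
  invFun a := u⁻¹ * a * v⁻¹
  left_inv a := by
    simp only [← mul_assoc]
    simp [mul_assoc]
  right_inv a := by
    simp only [← mul_assoc]
    simp [mul_assoc]

@[simp] private lemma mulUnits_apply {F : Type*} [Field F] {A : Type*} [Ring A] [Algebra F A]
    (u v : Aˣ) (a : A) : mulUnits (F := F) u v a = u * a * v := rfl


private lemma act_act {A : Type*} [Ring A] {D : Type*} [Group D] (σ : D →* Aˣ)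
    (f f' g g' : D) (a : A) :
    (σ f : A) * ((σ f' : A) * a * ((σ g')⁻¹ : Aˣ)) * ((σ g)⁻¹ : Aˣ)
      = (σ (f * f') : A) * a * ((σ (g * g'))⁻¹ : Aˣ) := by
  simp [map_mul, mul_inv_rev, mul_assoc]

private lemma act_one {A : Type*} [Ring A] {D : Type*} [Group D] (σ : D →* Aˣ) (a : A) :
    (σ 1 : A) * a * ((σ 1)⁻¹ : Aˣ) = a := by simp

-- the stabilizer subgroup
private def St {A : Type*} [Ring A] {D : Type*} [Group D] (σ : D →* Aˣ) (r : A) :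
    Subgroup (D × D) where
  carrier := {fg : D × D | (σ fg.1 : A) * r * ((σ fg.2)⁻¹ : Aˣ) = r}
  one_mem' := act_one σ r
  mul_mem' := by
    rintro ⟨f₁, g₁⟩ ⟨f₂, g₂⟩ h1 h2
    simp only [Set.mem_setOf_eq] at h1 h2 ⊢
    show (σ (f₁ * f₂) : A) * r * ((σ (g₁ * g₂))⁻¹ : Aˣ) = r
    rw [← act_act, h2, h1]
  inv_mem' := by
    rintro ⟨f, g⟩ h
    simp only [Set.mem_setOf_eq] at h ⊢
    calc (σ f⁻¹ : A) * r * ((σ g⁻¹)⁻¹ : Aˣ)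
        = (σ f⁻¹ : A) * ((σ f : A) * r * ((σ g)⁻¹ : Aˣ)) * ((σ g⁻¹)⁻¹ : Aˣ) := by rw [h]
      _ = (σ (f⁻¹ * f) : A) * r * ((σ (g⁻¹ * g))⁻¹ : Aˣ) := act_act σ f⁻¹ f g⁻¹ g r
      _ = r := by rw [inv_mul_cancel, inv_mul_cancel, act_one]

private lemma mem_St {A : Type*} [Ring A] {D : Type*} [Group D] (σ : D →* Aˣ) (r : A)
    (fg : D × D) : fg ∈ St σ r ↔ (σ fg.1 : A) * r * ((σ fg.2)⁻¹ : Aˣ) = r := Iff.rfl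

private lemma key_u {F : Type*} [Field F]
    {D : Type*} [Group D]
    {A : Type*} [Ring A] [Algebra F A] (σ : D →* Aˣ)
    (Ω : Finset A)
    (hbifree : ∀ w ∈ Ω, (∀ f : D, (σ f : A) * w = w → f = 1) ∧
      (∀ g : D, w * (σ g : A) = w → g = 1))
    (ha : ∀ (P Q : Subgroup D) (φ : Q ≃* P),
        (∃ w ∈ Ω, ∀ q : Q,
          (σ ((φ q : P) : D) : A) * w * (((σ (q : D))⁻¹ : Aˣ) : A) = w) →
        ∃ u : Aˣ, ∀ q : Q, (σ ((φ q : P) : D) : A) * (u : A) = (u : A) * (σ (q : D) : A))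
    (r : A) (hr : r ∈ Ω) :
    ∃ u : Aˣ, ∀ fg : D × D, fg ∈ St σ r →
      (σ fg.1 : A) * (u : A) * ((σ fg.2)⁻¹ : Aˣ) = (u : A) := by
  classical
  have huniqf : ∀ f f' g : D, (f, g) ∈ St σ r → (f', g) ∈ St σ r → f = f' := by
    intro f f' g h1 h2
    have h3 : ((f, g) * (f', g)⁻¹ : D × D) ∈ St σ r := mul_mem h1 (inv_mem h2)
    have h4 : ((f * f'⁻¹, g * g⁻¹) : D × D) ∈ St σ r := h3
    rw [mul_inv_cancel] at h4
    rw [mem_St] at h4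
    simp only [map_one, inv_one, Units.val_one, mul_one] at h4
    have h5 := (hbifree r hr).1 _ h4
    rw [mul_inv_eq_one] at h5
    exact h5
  have huniqg : ∀ f g g' : D, (f, g) ∈ St σ r → (f, g') ∈ St σ r → g = g' := by
    intro f g g' h1 h2
    have h3 : ((f, g) * (f, g')⁻¹ : D × D) ∈ St σ r := mul_mem h1 (inv_mem h2)
    have h4 : ((f * f⁻¹, g * g'⁻¹) : D × D) ∈ St σ r := h3
    rw [mul_inv_cancel] at h4
    rw [mem_St] at h4
    simp only [map_one, Units.val_one, one_mul] at h4
    -- h4 : r * ((σ (g * g'⁻¹))⁻¹ : Aˣ) = r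
    have h5 : r * (σ ((g * g'⁻¹)⁻¹) : A) = r := by rw [map_inv]; exact h4
    have h6 := (hbifree r hr).2 _ h5
    rw [inv_eq_one, mul_inv_eq_one] at h6
    exact h6
  set e1 : ↥(St σ r) →* D := (MonoidHom.fst D D).comp (St σ r).subtype with he1
  set e2 : ↥(St σ r) →* D := (MonoidHom.snd D D).comp (St σ r).subtype with he2
  have he1app : ∀ s : ↥(St σ r), e1 s = (s : D × D).1 := fun s => rfl
  have he2app : ∀ s : ↥(St σ r), e2 s = (s : D × D).2 := fun s => rfl
  have hmemS : ∀ s : ↥(St σ r), (((s : D × D).1, (s : D × D).2) : D × D) ∈ St σ r := by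
    intro s; rw [Prod.mk.eta]; exact s.2
  have hinj1 : Function.Injective e1 := by
    intro s s' h
    rw [he1app, he1app] at h
    have h2 := huniqg _ _ _ (hmemS s) (h ▸ hmemS s')
    apply Subtype.ext
    exact Prod.ext h h2
  have hinj2 : Function.Injective e2 := by
    intro s s' h
    rw [he2app, he2app] at h
    have h2 := huniqf _ _ _ (hmemS s) (h ▸ hmemS s')
    apply Subtype.ext
    exact Prod.ext h2 h
  have hrange1 : e1.range = (St σ r).map (MonoidHom.fst D D) := by
    ext x
    simp only [MonoidHom.mem_range, Subgroup.mem_map]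
    constructor
    · rintro ⟨s, rfl⟩; exact ⟨s, s.2, rfl⟩
    · rintro ⟨y, hy, rfl⟩; exact ⟨⟨y, hy⟩, rfl⟩
  have hrange2 : e2.range = (St σ r).map (MonoidHom.snd D D) := by
    ext x
    simp only [MonoidHom.mem_range, Subgroup.mem_map]
    constructor
    · rintro ⟨s, rfl⟩; exact ⟨s, s.2, rfl⟩
    · rintro ⟨y, hy, rfl⟩; exact ⟨⟨y, hy⟩, rfl⟩
  set P' : Subgroup D := (St σ r).map (MonoidHom.fst D D) with hP'
  set Q' : Subgroup D := (St σ r).map (MonoidHom.snd D D) with hQ'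
  set φ' : ↥Q' ≃* ↥P' :=
    (((MulEquiv.subgroupCongr hrange2.symm).trans
      (MonoidHom.ofInjective hinj2).symm).trans
      (MonoidHom.ofInjective hinj1)).trans (MulEquiv.subgroupCongr hrange1) with hφ'
  have hφmem : ∀ q : ↥Q', (((φ' q : P') : D), ((q : Q') : D)) ∈ St σ r := by
    intro q
    set s : ↥(St σ r) :=
      (MonoidHom.ofInjective hinj2).symm ((MulEquiv.subgroupCongr hrange2.symm) q) with hs
    have h1 : ((φ' q : P') : D) = (s : D × D).1 := by
      rw [hφ']
      simp only [MulEquiv.trans_apply]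
      rw [← hs, MulEquiv.subgroupCongr_apply, MonoidHom.ofInjective_apply, he1app]
    have h2 : ((q : Q') : D) = (s : D × D).2 := by
      have h3 : (MonoidHom.ofInjective hinj2) s = (MulEquiv.subgroupCongr hrange2.symm) q := by
        rw [hs, MulEquiv.apply_symm_apply]
      have h4 := congrArg (fun z : ↥(e2.range) => (z : D)) h3
      simp only [MonoidHom.ofInjective_apply, MulEquiv.subgroupCongr_apply] at h4
      rw [← h4, he2app]
    rw [h1, h2]
    exact hmemS s
  obtain ⟨u, hu⟩ := ha P' Q' φ' ⟨r, hr, fun q => hφmem q⟩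
  refine ⟨u, ?_⟩
  rintro ⟨f, g⟩ hm
  have hgQ : g ∈ Q' := ⟨(f, g), hm, rfl⟩
  set q : ↥Q' := ⟨g, hgQ⟩ with hq
  have h5 := hφmem q
  have h6 : f = ((φ' q : P') : D) := huniqf f _ g hm h5
  have h7 := hu q
  show (σ f : A) * (u : A) * ((σ g)⁻¹ : Aˣ) = (u : A)
  rw [h6]
  have h8 : ((q : Q') : D) = g := rfl
  rw [h8] at h7
  rw [h7]
  exact Units.mul_inv_cancel_right _ _

private lemma act_affine {F : Type*} [Field F] {A : Type*} [Ring A] [Algebra F A]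
    {D : Type*} [Group D] (σ : D →* Aˣ) (f g : D) (a b : A) (τ : F) :
    (σ f : A) * (a + τ • (b - a)) * ((σ g)⁻¹ : Aˣ)
      = (σ f : A) * a * ((σ g)⁻¹ : Aˣ)
        + τ • ((σ f : A) * b * ((σ g)⁻¹ : Aˣ) - (σ f : A) * a * ((σ g)⁻¹ : Aˣ)) := by
  simp [mul_add, add_mul, mul_sub, sub_mul, Algebra.mul_smul_comm, Algebra.smul_mul_assoc,
    smul_sub]


/-- Theorem 6.1: let `A` be a bifree bipermutation `D`-algebra (with `D×D`-stable basis
`Ω` on which `D×1` and `1×D` act freely).  Then the following are equivalent: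
(a) whenever `φ : Q → P` is an isomorphism between subgroups of `D` with
`Ω^{Δφ} ≠ ∅`, there is a unit `u ∈ Aˣ` with `σ(φ(q)) u = u σ(q)` for all `q ∈ Q`;
(b) `A` has a unital `D×D`-stable basis. -/
theorem stmt13 (F : Type*) [Field F] [IsAlgClosed F] (p : ℕ) [Fact p.Prime] [CharP F p]
    (D : Type*) [Group D] [Finite D] (hD : IsPGroup p D)
    (A : Type*) [Ring A] [Algebra F A] [FiniteDimensional F A] (σ : D →* Aˣ)
    (Ω : Finset A)
    (hbasis : LinearIndependent F (fun x : (Ω : Set A) => (x : A)) ∧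
      Submodule.span F (Ω : Set A) = ⊤)
    (hstable : ∀ w ∈ Ω, ∀ f g : D, (σ f : A) * w * ((σ g)⁻¹ : Aˣ) ∈ Ω)
    (hbifree : ∀ w ∈ Ω, (∀ f : D, (σ f : A) * w = w → f = 1) ∧
      (∀ g : D, w * (σ g : A) = w → g = 1)) :
    (∀ (P Q : Subgroup D) (φ : Q ≃* P),
        (∃ w ∈ Ω, ∀ q : Q,
          (σ ((φ q : P) : D) : A) * w * (((σ (q : D))⁻¹ : Aˣ) : A) = w) →
        ∃ u : Aˣ, ∀ q : Q, (σ ((φ q : P) : D) : A) * (u : A) = (u : A) * (σ (q : D) : A)) ↔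
      (∃ Ω' : Finset A,
        (LinearIndependent F (fun x : (Ω' : Set A) => (x : A)) ∧
          Submodule.span F (Ω' : Set A) = ⊤) ∧
        (∀ w ∈ Ω', ∀ f g : D, (σ f : A) * w * ((σ g)⁻¹ : Aˣ) ∈ Ω') ∧
        ∀ w ∈ Ω', IsUnit w) := by
  constructor
  · -- (a) → (b)
    intro ha
    classical
    letI : Fintype D := Fintype.ofFinite D
    letI : Inhabited A := ⟨0⟩
    set bΩ : Module.Basis (Ω : Set A) F A :=
      Module.Basis.mk hbasis.1 (by rw [Subtype.range_coe]; exact hbasis.2.ge) with hbΩdef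
    have hbΩ_apply : ∀ i : (Ω : Set A), bΩ i = (i : A) := fun i => Module.Basis.mk_apply _ _ _
    -- global unit choice
    have keychoice : ∀ r : A, ∃ u : Aˣ, r ∈ Ω → ∀ fg : D × D, fg ∈ St σ r →
        (σ fg.1 : A) * (u : A) * ((σ fg.2)⁻¹ : Aˣ) = (u : A) := by
      intro r
      by_cases h : r ∈ Ω
      · obtain ⟨u, hu⟩ := key_u (F := F) σ Ω hbifree ha r h
        exact ⟨u, fun _ => hu⟩
      · exact ⟨1, fun hr => absurd hr h⟩
    set u : A → Aˣ := fun r => (keychoice r).choose with hudef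
    have hu : ∀ r, r ∈ Ω → ∀ fg : D × D, fg ∈ St σ r →
        (σ fg.1 : A) * (u r : A) * ((σ fg.2)⁻¹ : Aˣ) = (u r : A) :=
      fun r => (keychoice r).choose_spec
    -- orbits
    set orb : A → Finset A := fun r =>
      Finset.univ.image (fun fg : D × D => (σ fg.1 : A) * r * ((σ fg.2)⁻¹ : Aˣ)) with horbdef
    have horb_mem : ∀ (r : A) (f g : D), (σ f : A) * r * ((σ g)⁻¹ : Aˣ) ∈ orb r :=
      fun r f g => Finset.mem_image.mpr ⟨(f, g), Finset.mem_univ _, rfl⟩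
    have horb_self : ∀ r : A, r ∈ orb r := by
      intro r
      have h := horb_mem r 1 1
      rwa [act_one] at h
    have horb_eq : ∀ r x : A, x ∈ orb r → orb x = orb r := by
      intro r x hx
      rcases Finset.mem_image.mp hx with ⟨⟨f, g⟩, -, rfl⟩
      apply Finset.Subset.antisymm
      · intro y hy
        rcases Finset.mem_image.mp hy with ⟨⟨f', g'⟩, -, rfl⟩
        rw [act_act]
        exact horb_mem r _ _
      · intro y hy
        rcases Finset.mem_image.mp hy with ⟨⟨f', g'⟩, -, rfl⟩
        have hrx : r = (σ f⁻¹ : A) * ((σ f : A) * r * ((σ g)⁻¹ : Aˣ)) * ((σ g⁻¹)⁻¹ : Aˣ) := by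
          rw [act_act, inv_mul_cancel, inv_mul_cancel, act_one]
        have h2 : (σ f' : A) * r * ((σ g')⁻¹ : Aˣ)
            = (σ (f' * f⁻¹) : A) * ((σ f : A) * r * ((σ g)⁻¹ : Aˣ)) * ((σ (g' * g⁻¹))⁻¹ : Aˣ) := by
          conv_lhs => rw [hrx]
          rw [act_act]
        rw [h2]
        exact horb_mem _ _ _
    have horb_sub : ∀ r, r ∈ Ω → orb r ⊆ Ω := by
      intro r hr y hy
      rcases Finset.mem_image.mp hy with ⟨⟨f, g⟩, -, rfl⟩
      exact hstable r hr f g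
    -- canonical representatives
    set R : A → A := fun r => (orb r).toList.head! with hRdef
    have hR_mem : ∀ r : A, R r ∈ orb r := by
      intro r
      have hne : (orb r).toList ≠ [] := by
        intro h
        have h2 := Finset.toList_eq_nil.mp h
        have h3 := horb_self r
        rw [h2] at h3
        exact absurd h3 (Finset.notMem_empty r)
      have h4 := List.head!_mem_self hne
      rwa [Finset.mem_toList] at h4
    have hR_eq : ∀ r x : A, x ∈ orb r → R x = R r := by
      intro r x hx
      rw [hRdef]
      simp only
      rw [horb_eq r x hx]
    have hR_memΩ : ∀ r, r ∈ Ω → R r ∈ Ω := fun r hr => horb_sub r hr (hR_mem r)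
    -- pair choices
    have hpair_ex : ∀ x, x ∈ Ω → ∃ fg : D × D,
        (σ fg.1 : A) * R x * ((σ fg.2)⁻¹ : Aˣ) = x := by
      intro x hx
      have h1 : orb (R x) = orb x := horb_eq x (R x) (hR_mem x)
      have h2 : x ∈ orb (R x) := by rw [h1]; exact horb_self x
      rcases Finset.mem_image.mp h2 with ⟨fg, -, hfg⟩
      exact ⟨fg, hfg⟩
    set pair : A → D × D := fun x => if h : x ∈ Ω then (hpair_ex x h).choose else 1 with hpairdef
    have hpair_spec : ∀ x, x ∈ Ω →
        (σ (pair x).1 : A) * R x * ((σ (pair x).2)⁻¹ : Aˣ) = x := by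
      intro x hx
      rw [hpairdef]
      simp only [dif_pos hx]
      exact (hpair_ex x hx).choose_spec
    -- the delta family
    set δ : A → A := fun x =>
      (σ (pair x).1 : A) * (u (R x) : A) * ((σ (pair x).2)⁻¹ : Aˣ) - x with hδdef
    -- polynomial matrices
    set MP : Matrix (Ω : Set A) (Ω : Set A) (Polynomial F) := fun i j =>
      Polynomial.C (bΩ.repr (j : A) i) + Polynomial.X * Polynomial.C (bΩ.repr (δ (j : A)) i)
      with hMPdef
    set dP : Polynomial F := MP.det with hdPdef
    set LP : A → Matrix (Ω : Set A) (Ω : Set A) (Polynomial F) := fun r => fun i j =>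
      Polynomial.C (bΩ.repr (r * (j : A)) i) +
        Polynomial.X * Polynomial.C (bΩ.repr (((u r : A) - r) * (j : A)) i) with hLPdef
    set qP : A → Polynomial F := fun r => (LP r).det with hqPdef
    have hMPeval : ∀ τ : F, MP.map (Polynomial.evalRingHom τ) =
        bΩ.toMatrix (fun j : (Ω : Set A) => (j : A) + τ • δ (j : A)) := by
      intro τ
      ext i j
      rw [Matrix.map_apply]
      simp only [hMPdef, Matrix.map_apply, Polynomial.coe_evalRingHom, Polynomial.eval_add,
        Polynomial.eval_mul, Polynomial.eval_C, Polynomial.eval_X, Module.Basis.toMatrix_apply,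
        map_add, map_smul, Finsupp.add_apply, Finsupp.smul_apply, smul_eq_mul]
    have hdPτ : ∀ τ : F, dP.eval τ =
        (bΩ.toMatrix (fun j : (Ω : Set A) => (j : A) + τ • δ (j : A))).det := by
      intro τ
      have h1 := RingHom.map_det (Polynomial.evalRingHom τ) MP
      rw [RingHom.mapMatrix_apply, hMPeval τ] at h1
      simpa [Polynomial.coe_evalRingHom] using h1
    have hdP0 : dP.eval 0 = 1 := by
      rw [hdPτ 0]
      have h1 : (fun j : (Ω : Set A) => (j : A) + (0 : F) • δ (j : A)) = ⇑bΩ := by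
        funext j
        rw [zero_smul, add_zero, hbΩ_apply]
      rw [h1, Module.Basis.toMatrix_self]
      exact Matrix.det_one
    have hLPeval : ∀ (r : A) (τ : F), (LP r).map (Polynomial.evalRingHom τ) =
        (Matrix.of fun i j : (Ω : Set A) =>
          bΩ.repr ((r + τ • ((u r : A) - r)) * (j : A)) i) := by
      intro r τ
      ext i j
      rw [Matrix.map_apply]
      simp only [hLPdef, Matrix.map_apply, Polynomial.coe_evalRingHom, Polynomial.eval_add,
        Polynomial.eval_mul, Polynomial.eval_C, Polynomial.eval_X, Matrix.of_apply,
        add_mul, Algebra.smul_mul_assoc, map_add, map_smul, Finsupp.add_apply,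
        Finsupp.smul_apply, smul_eq_mul]
    have hqPτ : ∀ (r : A) (τ : F), (qP r).eval τ =
        (Matrix.of fun i j : (Ω : Set A) =>
          bΩ.repr ((r + τ • ((u r : A) - r)) * (j : A)) i).det := by
      intro r τ
      have h1 := RingHom.map_det (Polynomial.evalRingHom τ) (LP r)
      rw [RingHom.mapMatrix_apply, hLPeval r τ] at h1
      simpa [Polynomial.coe_evalRingHom] using h1
    have hqP1 : ∀ r : A, (qP r).eval 1 ≠ 0 := by
      intro r
      rw [hqPτ r 1]
      have h2 : r + (1 : F) • ((u r : A) - r) = (u r : A) := by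
        rw [one_smul]; abel
      rw [h2]
      have h3 : (Matrix.of fun i j : (Ω : Set A) => bΩ.repr ((u r : A) * (j : A)) i)
          = LinearMap.toMatrix bΩ bΩ (mulUnits (F := F) (u r) 1).toLinearMap := by
        ext i j
        rw [LinearMap.toMatrix_apply, hbΩ_apply]
        simp [mulUnits]
      rw [h3]
      exact (LinearEquiv.isUnit_det (mulUnits (F := F) (u r) 1) bΩ bΩ).ne_zero
    -- choose the good parameter τ
    have hbad : ∃ τ : F, dP.eval τ ≠ 0 ∧ ∀ r ∈ Ω, (qP r).eval τ ≠ 0 := by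
      have hdP_ne : dP ≠ 0 := by
        intro h
        rw [h] at hdP0
        simp at hdP0
      have hqP_ne : ∀ r ∈ Ω, qP r ≠ 0 := by
        intro r _ h
        exact hqP1 r (by rw [h]; simp)
      have hprod : dP * ∏ r ∈ Ω, qP r ≠ 0 :=
        mul_ne_zero hdP_ne (Finset.prod_ne_zero_iff.mpr hqP_ne)
      by_contra hcon
      push_neg at hcon
      apply hprod
      apply Polynomial.zero_of_eval_zero
      intro τ
      rw [Polynomial.eval_mul, Polynomial.eval_prod]
      by_cases hd : dP.eval τ = 0
      · rw [hd, zero_mul]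
      · obtain ⟨r, hr, hq⟩ := hcon τ hd
        rw [Finset.prod_eq_zero hr hq, mul_zero]
    obtain ⟨τ, hdτ, hqτ⟩ := hbad
    set v : A → A := fun r => r + τ • ((u r : A) - r) with hvdef
    -- each v r is a unit
    have hunit : ∀ r, r ∈ Ω → IsUnit (v r) := by
      intro r hr
      have h1 : (Matrix.of fun i j : (Ω : Set A) =>
          bΩ.repr ((r + τ • ((u r : A) - r)) * (j : A)) i).det ≠ 0 := by
        rw [← hqPτ r τ]
        exact hqτ r hr
      have h2 : (Matrix.of fun i j : (Ω : Set A) =>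
          bΩ.repr ((r + τ • ((u r : A) - r)) * (j : A)) i)
          = LinearMap.toMatrix bΩ bΩ (LinearMap.mulLeft F (v r)) := by
        ext i j
        rw [LinearMap.toMatrix_apply, LinearMap.mulLeft_apply, hbΩ_apply]
        rfl
      rw [h2] at h1
      have h3 : IsUnit (LinearMap.toMatrix bΩ bΩ (LinearMap.mulLeft F (v r))).det :=
        isUnit_iff_ne_zero.mpr h1
      set ε := LinearEquiv.ofIsUnitDet h3 with hεdef
      have hεapp : ∀ a : A, ε a = v r * a := by
        intro a
        rw [hεdef, LinearEquiv.ofIsUnitDet_apply, LinearMap.mulLeft_apply]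
      have hx1 : v r * (ε.symm 1) = 1 := by
        rw [← hεapp]
        exact ε.apply_symm_apply 1
      have hx2 : (ε.symm 1) * v r = 1 := by
        apply ε.injective
        rw [hεapp, hεapp]
        rw [← mul_assoc, hx1, one_mul, mul_one]
      exact ⟨⟨v r, ε.symm 1, hx1, hx2⟩, rfl⟩
    -- v r is fixed by the stabilizer of r
    have hstabv : ∀ r, r ∈ Ω → ∀ fg : D × D, fg ∈ St σ r →
        (σ fg.1 : A) * v r * ((σ fg.2)⁻¹ : Aˣ) = v r := by
      intro r hr fg hfg
      show (σ fg.1 : A) * (r + τ • ((u r : A) - r)) * ((σ fg.2)⁻¹ : Aˣ)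
        = r + τ • ((u r : A) - r)
      rw [act_affine σ fg.1 fg.2 r ((u r : A)) τ, hu r hr fg hfg, (mem_St σ r fg).mp hfg]
    -- the deformed family lands in the translates of the v's
    have hψ : ∀ x, x ∈ Ω → x + τ • δ x
        = (σ (pair x).1 : A) * v (R x) * ((σ (pair x).2)⁻¹ : Aˣ) := by
      intro x hx
      show x + τ • δ x
        = (σ (pair x).1 : A) * (R x + τ • ((u (R x) : A) - R x)) * ((σ (pair x).2)⁻¹ : Aˣ)
      rw [act_affine σ (pair x).1 (pair x).2 (R x) ((u (R x) : A)) τ, hpair_spec x hx]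
    -- the new basis
    set Ω' : Finset A := Finset.univ.image (fun z : (D × D) × (Ω : Set A) =>
      (σ z.1.1 : A) * v (R (z.2 : A)) * ((σ z.1.2)⁻¹ : Aˣ)) with hΩ'def
    -- span
    have hdet : IsUnit (bΩ.det (fun j : (Ω : Set A) => (j : A) + τ • δ (j : A))) := by
      rw [Module.Basis.det_apply, ← hdPτ τ]
      exact isUnit_iff_ne_zero.mpr hdτ
    obtain ⟨hli0, hsp0⟩ := (Module.Basis.is_basis_iff_det bΩ).mpr hdet
    have hrange_sub : Set.range (fun j : (Ω : Set A) => (j : A) + τ • δ (j : A))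
        ⊆ (Ω' : Set A) := by
      rintro y ⟨j, rfl⟩
      show (j : A) + τ • δ (j : A) ∈ (Ω' : Set A)
      rw [hψ (j : A) (Finset.mem_coe.mp j.2)]
      exact Finset.mem_coe.mpr
        (Finset.mem_image.mpr ⟨⟨pair (j : A), j⟩, Finset.mem_univ _, rfl⟩)
    have hΩ'span : Submodule.span F (Ω' : Set A) = ⊤ := by
      apply le_antisymm le_top
      rw [← hsp0]
      exact Submodule.span_mono hrange_sub
    -- cardinality bookkeeping
    set reps : Finset A := Ω.image R with hrepsdef
    have hreps_mem : ∀ r ∈ reps, r ∈ Ω ∧ R r = r := by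
      intro r hrr
      rcases Finset.mem_image.mp hrr with ⟨x, hx, rfl⟩
      exact ⟨hR_memΩ x hx, hR_eq x (R x) (hR_mem x)⟩
    set orbv : A → Finset A := fun r =>
      Finset.univ.image (fun fg : D × D => (σ fg.1 : A) * v r * ((σ fg.2)⁻¹ : Aˣ)) with horbvdef
    have hΩ'sub : Ω' ⊆ reps.biUnion orbv := by
      intro y hy
      rcases Finset.mem_image.mp hy with ⟨⟨⟨f, g⟩, x⟩, -, rfl⟩
      apply Finset.mem_biUnion.mpr
      refine ⟨R (x : A), Finset.mem_image.mpr ⟨(x : A), Finset.mem_coe.mp x.2, rfl⟩, ?_⟩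
      exact Finset.mem_image.mpr ⟨(f, g), Finset.mem_univ _, rfl⟩
    have hcard_orbv : ∀ r, r ∈ Ω → (orbv r).card ≤ (orb r).card := by
      intro r hr
      apply Finset.card_le_card_of_surjOn (fun y =>
        if hy : ∃ fg : D × D, (σ fg.1 : A) * r * ((σ fg.2)⁻¹ : Aˣ) = y then
          (σ hy.choose.1 : A) * v r * ((σ hy.choose.2)⁻¹ : Aˣ) else 0)
      intro y hy
      rcases Finset.mem_image.mp (Finset.mem_coe.mp hy) with ⟨⟨f, g⟩, -, rfl⟩
      refine ⟨(σ f : A) * r * ((σ g)⁻¹ : Aˣ), Finset.mem_coe.mpr (horb_mem r f g), ?_⟩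
      have hex : ∃ fg : D × D, (σ fg.1 : A) * r * ((σ fg.2)⁻¹ : Aˣ)
          = (σ f : A) * r * ((σ g)⁻¹ : Aˣ) := ⟨(f, g), rfl⟩
      simp only [dif_pos hex]
      have hch := hex.choose_spec
      have hmem : ((f⁻¹ * hex.choose.1, g⁻¹ * hex.choose.2) : D × D) ∈ St σ r := by
        rw [mem_St]
        show (σ (f⁻¹ * hex.choose.1) : A) * r * ((σ (g⁻¹ * hex.choose.2))⁻¹ : Aˣ) = r
        rw [← act_act, hch, act_act, inv_mul_cancel, inv_mul_cancel, act_one]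
      have h5 := hstabv r hr _ hmem
      calc (σ hex.choose.1 : A) * v r * ((σ hex.choose.2)⁻¹ : Aˣ)
          = (σ (f * (f⁻¹ * hex.choose.1)) : A) * v r
              * ((σ (g * (g⁻¹ * hex.choose.2)))⁻¹ : Aˣ) := by
            rw [mul_inv_cancel_left, mul_inv_cancel_left]
        _ = (σ f : A) * ((σ (f⁻¹ * hex.choose.1) : A) * v r
              * ((σ (g⁻¹ * hex.choose.2))⁻¹ : Aˣ)) * ((σ g)⁻¹ : Aˣ) :=
            (act_act σ f _ g _ (v r)).symm
        _ = (σ f : A) * v r * ((σ g)⁻¹ : Aˣ) := by rw [h5]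
    have hbiU : reps.biUnion orb = Ω := by
      ext y
      simp only [Finset.mem_biUnion]
      constructor
      · rintro ⟨r, hrr, hy⟩
        exact horb_sub r (hreps_mem r hrr).1 hy
      · intro hy
        refine ⟨R y, Finset.mem_image.mpr ⟨y, hy, rfl⟩, ?_⟩
        rw [horb_eq y (R y) (hR_mem y)]
        exact horb_self y
    have hdisj : ∀ r ∈ reps, ∀ r' ∈ reps, r ≠ r' → Disjoint (orb r) (orb r') := by
      intro r hrr r' hrr' hne
      rw [Finset.disjoint_left]
      intro y hy hy'
      apply hne
      calc r = R r := (hreps_mem r hrr).2.symm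
        _ = R y := (hR_eq r y hy).symm
        _ = R r' := hR_eq r' y hy'
        _ = r' := (hreps_mem r' hrr').2
    have hcardΩ : ∑ r ∈ reps, (orb r).card = Ω.card := by
      rw [← Finset.card_biUnion hdisj, hbiU]
    have hΩ'le : Ω'.card ≤ Ω.card := by
      calc Ω'.card ≤ (reps.biUnion orbv).card := Finset.card_le_card hΩ'sub
        _ ≤ ∑ r ∈ reps, (orbv r).card := Finset.card_biUnion_le
        _ ≤ ∑ r ∈ reps, (orb r).card :=
            Finset.sum_le_sum (fun r hrr => hcard_orbv r (hreps_mem r hrr).1)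
        _ = Ω.card := hcardΩ
    have hfinrank : Module.finrank F A = Ω.card := by
      rw [Module.finrank_eq_card_basis bΩ]
      rw [Fintype.card_congr (Equiv.subtypeEquivRight (fun x => Finset.mem_coe))]
      exact Fintype.card_coe Ω
    have hΩ'ge : Ω.card ≤ Ω'.card := by
      have h2 := finrank_span_le_card (R := F) (Ω' : Set A)
      rw [Finset.toFinset_coe] at h2
      calc Ω.card = Module.finrank F A := hfinrank.symm
        _ = Module.finrank F (⊤ : Submodule F A) := (finrank_top F A).symm
        _ = Module.finrank F (Submodule.span F ((Ω' : Set A))) := by rw [hΩ'span]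
        _ ≤ Ω'.card := h2
    have hΩ'card : Ω'.card = Ω.card := le_antisymm hΩ'le hΩ'ge
    have hΩ'li : LinearIndependent F (fun x : (Ω' : Set A) => (x : A)) := by
      apply linearIndependent_of_top_le_span_of_card_eq_finrank
      · rw [Subtype.range_coe]
        exact hΩ'span.ge
      · rw [Fintype.card_congr (Equiv.subtypeEquivRight (fun x => Finset.mem_coe)),
          Fintype.card_coe, hΩ'card, hfinrank]
    refine ⟨Ω', ⟨hΩ'li, hΩ'span⟩, ?_, ?_⟩
    · intro y hy f g
      rcases Finset.mem_image.mp hy with ⟨⟨⟨f', g'⟩, x⟩, -, rfl⟩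
      rw [act_act]
      exact Finset.mem_image.mpr ⟨⟨(f * f', g * g'), x⟩, Finset.mem_univ _, rfl⟩
    · intro y hy
      rcases Finset.mem_image.mp hy with ⟨⟨⟨f', g'⟩, x⟩, -, rfl⟩
      have h1 : IsUnit (v (R (x : A))) := hunit _ (hR_memΩ (x : A) (Finset.mem_coe.mp x.2))
      exact ((Units.isUnit (σ f')).mul h1).mul (Units.isUnit ((σ g')⁻¹))
  · -- (b) → (a)
    intro hb
    obtain ⟨Ω', ⟨hli', hsp'⟩, hst', hu'⟩ := hb
    classical
    rintro P Q φ ⟨w, hwΩ, hwfix⟩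
    have hwmem : w ∈ (Ω : Set A) := Finset.mem_coe.mpr hwΩ
    set bΩ : Module.Basis (Ω : Set A) F A := Module.Basis.mk hbasis.1 (by rw [Subtype.range_coe]; exact hbasis.2.ge) with hbΩdef
    set b' : Module.Basis (Ω' : Set A) F A := Module.Basis.mk hli' (by rw [Subtype.range_coe]; exact hsp'.ge) with hb'def
    -- the linear action of ↥Q
    set eA : ↥Q → A ≃ₗ[F] A :=
      fun q => mulUnits (F := F) (σ ((φ q : P) : D)) ((σ (q : D))⁻¹) with heAdef
    have heA : ∀ (q : ↥Q) (a : A),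
        eA q a = (σ ((φ q : P) : D) : A) * a * ((σ (q : D))⁻¹ : Aˣ) := fun _ _ => rfl
    have heA_comp : ∀ (q q' : ↥Q) (a : A), eA q (eA q' a) = eA (q * q') a := by
      intro q q' a
      rw [heA, heA, heA, act_act]
      have h1 : ((φ (q * q') : P) : D) = ((φ q : P) : D) * ((φ q' : P) : D) := by
        rw [map_mul]; rfl
      have h2 : ((q * q' : ↥Q) : D) = (q : D) * (q' : D) := rfl
      rw [h1, h2]
    have heA_one : ∀ a : A, eA (1 : ↥Q) a = a := by
      intro a
      rw [heA]
      have h1 : ((φ (1 : ↥Q) : P) : D) = 1 := by rw [map_one]; rfl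
      have h2 : ((1 : ↥Q) : D) = 1 := rfl
      rw [h1, h2, act_one]
    have heA_inv : ∀ (q : ↥Q) (a : A), eA q⁻¹ (eA q a) = a := by
      intro q a
      rw [heA_comp, inv_mul_cancel, heA_one]
    -- eA maps Ω' into Ω' and Ω into Ω
    have hstabA : ∀ (q : ↥Q), ∀ a ∈ Ω, eA q a ∈ Ω := by
      intro q a ha; rw [heA]; exact hstable a ha _ _
    have hstabA' : ∀ (q : ↥Q), ∀ a ∈ Ω', eA q a ∈ Ω' := by
      intro q a ha; rw [heA]; exact hst' a ha _ _
    -- permutation representation on A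
    set ρ : ↥Q →* Equiv.Perm A :=
      { toFun := fun q => ⟨fun a => eA q a, fun a => eA q⁻¹ a,
          fun a => heA_inv q a, fun a => by
            have := heA_inv q⁻¹ a; rwa [inv_inv] at this⟩
        map_one' := by ext a; exact heA_one a
        map_mul' := by intro q q'; ext a; exact (heA_comp q q' a).symm } with hρdef
    have hρ : ∀ (q : ↥Q) (a : A), ρ q a = eA q a := fun _ _ => rfl
    -- index permutations
    have hπ : ∀ q : ↥Q, ∃ π : (Ω' : Set A) ≃ (Ω' : Set A),
        ∀ i : (Ω' : Set A), (π i : A) = eA q i := by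
      intro q
      refine ⟨⟨fun i => ⟨eA q i, Finset.mem_coe.mpr (hstabA' q i (Finset.mem_coe.mp i.2))⟩,
        fun i => ⟨eA q⁻¹ i, Finset.mem_coe.mpr (hstabA' q⁻¹ i (Finset.mem_coe.mp i.2))⟩,
        fun i => Subtype.ext (heA_inv q i),
        fun i => Subtype.ext (by
          have := heA_inv q⁻¹ (i : A); rwa [inv_inv] at this)⟩, fun i => rfl⟩
    have hπΩ : ∀ q : ↥Q, ∃ π : (Ω : Set A) ≃ (Ω : Set A),
        ∀ i : (Ω : Set A), (π i : A) = eA q i := by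
      intro q
      refine ⟨⟨fun i => ⟨eA q i, Finset.mem_coe.mpr (hstabA q i (Finset.mem_coe.mp i.2))⟩,
        fun i => ⟨eA q⁻¹ i, Finset.mem_coe.mpr (hstabA q⁻¹ i (Finset.mem_coe.mp i.2))⟩,
        fun i => Subtype.ext (heA_inv q i),
        fun i => Subtype.ext (by
          have := heA_inv q⁻¹ (i : A); rwa [inv_inv] at this)⟩, fun i => rfl⟩
    have hwfix' : ∀ q : ↥Q, eA q w = w := by
      intro q; rw [heA]; exact hwfix q
    -- the two invariant functionals
    set β : A → F := fun a => bΩ.repr a ⟨w, hwmem⟩ with hβdef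
    set c : A → F := fun a =>
      if h : a ∈ (Ω' : Set A) then b'.repr w ⟨a, h⟩ else 0 with hcdef
    have hβinv : ∀ (q : ↥Q) (a : A), β (eA q a) = β a := by
      intro q a
      obtain ⟨π, hπs⟩ := hπΩ q
      have hb : ∀ i, eA q (bΩ i) = bΩ (π i) := by
        intro i
        rw [hbΩdef, Module.Basis.mk_apply, Module.Basis.mk_apply, hπs]
      have key := myrepr_perm bΩ (eA q) π hb a ⟨w, hwmem⟩
      have hfixw : π ⟨w, hwmem⟩ = ⟨w, hwmem⟩ :=
        Subtype.ext (by rw [hπs]; exact hwfix' q)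
      rw [hfixw] at key
      exact key
    have hcinv : ∀ (q : ↥Q), ∀ a ∈ Ω', c (eA q a) = c a := by
      intro q a ha
      have ha' : a ∈ (Ω' : Set A) := Finset.mem_coe.mpr ha
      have hqa' : eA q a ∈ (Ω' : Set A) := Finset.mem_coe.mpr (hstabA' q a ha)
      obtain ⟨π, hπs⟩ := hπ q
      have hb : ∀ i, eA q (b' i) = b' (π i) := by
        intro i
        rw [hb'def, Module.Basis.mk_apply, Module.Basis.mk_apply, hπs]
      have key := myrepr_perm b' (eA q) π hb w ⟨a, ha'⟩
      rw [hwfix' q] at key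
      have hπa : π ⟨a, ha'⟩ = ⟨eA q a, hqa'⟩ := Subtype.ext (hπs _)
      rw [hπa] at key
      rw [hcdef]
      simp only [dif_pos ha', dif_pos hqa']
      exact key
    -- the sum identity
    have hβw : β w = 1 := by
      have h2 : bΩ.repr (bΩ ⟨w, hwmem⟩) ⟨w, hwmem⟩ = 1 := by
        rw [Module.Basis.repr_self, Finsupp.single_apply, if_pos rfl]
      have h3 : bΩ ⟨w, hwmem⟩ = w := by rw [hbΩdef, Module.Basis.mk_apply]
      rw [h3] at h2
      exact h2
    have hsum : ∑ x ∈ Ω', c x * β x = 1 := by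
      have hw_expand : (∑ i : (Ω' : Set A), b'.repr w i • (i : A)) = w := by
        have := b'.sum_repr w
        simpa only [hb'def, Module.Basis.mk_apply] using this
      have hβlin : β (∑ i : (Ω' : Set A), b'.repr w i • (i : A))
          = ∑ i : (Ω' : Set A), b'.repr w i * β (i : A) := by
        show bΩ.coord ⟨w, hwmem⟩ (∑ i : (Ω' : Set A), b'.repr w i • (i : A)) = _
        rw [map_sum]
        apply Finset.sum_congr rfl
        intro i _
        rw [map_smul, smul_eq_mul]
        rfl
      calc ∑ x ∈ Ω', c x * β x
          = ∑ i : (Ω' : Set A), c i * β (i : A) := (Finset.sum_finset_coe _ _).symm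
        _ = ∑ i : (Ω' : Set A), b'.repr w i * β (i : A) := by
            apply Finset.sum_congr rfl
            intro i _
            congr 1
            rw [hcdef]
            simp only [dif_pos i.2]
        _ = β (∑ i : (Ω' : Set A), b'.repr w i • (i : A)) := hβlin.symm
        _ = 1 := by rw [hw_expand, hβw]
    -- fixed point extraction
    have hfix : ∃ x ∈ Ω', ∀ q : ↥Q, eA q x = x := by
      by_contra hno
      push_neg at hno
      have h0 := mypsum (hD.to_subgroup Q) ρ (fun a => c a * β a) Ω'
        (fun q x hx => hstabA' q x hx)
        (fun q x hx => by
          show c (eA q x) * β (eA q x) = c x * β x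
          rw [hcinv q x hx, hβinv q x])
        (fun x hx => by
          obtain ⟨q, hq⟩ := hno x hx
          exact ⟨q, hq⟩)
      rw [hsum] at h0
      exact one_ne_zero h0
    obtain ⟨x, hxΩ', hxfix⟩ := hfix
    refine ⟨(hu' x hxΩ').unit, ?_⟩
    intro q
    have hx : ((hu' x hxΩ').unit : A) = x := (hu' x hxΩ').unit_spec
    rw [hx]
    have h1 := hxfix q
    rw [heA] at h1
    calc (σ ((φ q : P) : D) : A) * x
        = ((σ ((φ q : P) : D) : A) * x * ((σ (q : D))⁻¹ : Aˣ)) * (σ (q : D) : A) := by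
          exact (Units.inv_mul_cancel_right _ _).symm
      _ = x * (σ (q : D) : A) := by rw [h1]
end

section
/- Let F be a field of prime characteristic p, let G be a finite group, let P be a subgroup of G that is a p-group, and let x be an element of the group algebra FG such that u x u⁻¹ = x for every u ∈ P (where elements of G are identified with their images in FG). Then Σ_{g∈G} x_g = Σ_{g∈C_G(P)} x_g in F, where x_g denotes the coefficient of g in x and C_G(P) is the centralizer of P in G. -/
open MulAction in
theorem aux16 {F : Type*} [Field F] {p : ℕ} [hp : Fact p.Prime] [CharP F p]
    {P : Type*} [Group P] [Fintype P] {G : Type*} [Fintype G] [MulAction P G]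
    (hP : IsPGroup p P) (f : G → F) (hf : ∀ (u : P) (g : G), f (u • g) = f g) :
    ∑ g : G, f g = ∑ g ∈ (Set.toFinite (fixedPoints P G)).toFinset, f g := by
  classical
  obtain ⟨n, hn⟩ := IsPGroup.iff_card.mp hP
  rw [← Finset.sum_fiberwise Finset.univ (Quotient.mk (orbitRel P G)) f]
  have hout : ∀ g ∈ fixedPoints P G, (Quotient.mk (orbitRel P G) g).out = g := by
    intro g hg
    have h := Quotient.mk_out (s := orbitRel P G) g
    obtain ⟨u, hu⟩ := (orbitRel_apply).mp h
    exact hu.symm.trans (hg u)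
  have key : ∀ ω : Quotient (orbitRel P G),
      ∑ g ∈ Finset.univ.filter (fun g => Quotient.mk (orbitRel P G) g = ω), f g
        = if ω.out ∈ fixedPoints P G then f ω.out else 0 := by
    intro ω
    have hfib : Finset.univ.filter (fun g => Quotient.mk (orbitRel P G) g = ω)
        = (orbit P ω.out).toFinset := by
      ext g
      simp only [Finset.mem_filter, Finset.mem_univ, true_and, Set.mem_toFinset]
      rw [← Quotient.out_eq ω, Quotient.eq, orbitRel_apply, Quotient.out_eq]
    have hconst : ∀ g ∈ (orbit P ω.out).toFinset, f g = f ω.out := by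
      intro g hg
      obtain ⟨u, hu⟩ := Set.mem_toFinset.mp hg
      rw [← hu, hf]
    rw [hfib, Finset.sum_congr rfl hconst, Finset.sum_const, Set.toFinset_card]
    by_cases hfix : ω.out ∈ fixedPoints P G
    · rw [if_pos hfix, mem_fixedPoints_iff_card_orbit_eq_one.mp hfix, one_smul]
    · rw [if_neg hfix]
      have hdvd : Fintype.card (orbit P ω.out) ∣ p ^ n := by
        rw [← hn, Nat.card_eq_fintype_card, ← card_orbit_mul_card_stabilizer_eq_card_group P ω.out]
        exact Dvd.intro _ rfl
      obtain ⟨m, hm, hcard⟩ := (Nat.dvd_prime_pow hp.out).mp hdvd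
      have hm1 : m ≠ 0 := by
        rintro rfl
        exact hfix (mem_fixedPoints_iff_card_orbit_eq_one.mpr (by simpa using hcard))
      have hpd : p ∣ Fintype.card (orbit P ω.out) := hcard ▸ dvd_pow_self p hm1
      have : ((Fintype.card (orbit P ω.out) : F)) = 0 := (CharP.cast_eq_zero_iff F p _).mpr hpd
      rw [nsmul_eq_mul, this, zero_mul]
  rw [Finset.sum_congr rfl (fun ω _ => key ω), Finset.sum_ite, Finset.sum_const_zero, add_zero]
  refine Finset.sum_nbij' (fun ω => ω.out) (fun g => Quotient.mk (orbitRel P G) g)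
    ?_ ?_ ?_ ?_ (fun ω _ => rfl)
  · intro ω hω
    simpa using (Finset.mem_filter.mp hω).2
  · intro g hg
    rw [Set.Finite.mem_toFinset] at hg
    simp only [Finset.mem_filter, Finset.mem_univ, true_and]
    rw [hout g hg]; exact hg
  · intro ω hω
    exact Quotient.out_eq ω
  · intro g hg
    exact hout g ((Set.toFinite _).mem_toFinset.mp hg)

/-- From the proof of Theorem 7.5: if `P` is a `p`-subgroup of the finite group `G`, `F`
has characteristic `p`, and `x ∈ FG` is fixed under conjugation by every element of `P`,
then the sum of all coefficients of `x` equals the sum of the coefficients of `x` over the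
centralizer `C_G(P)`. -/
theorem stmt16 (F : Type*) [Field F] (p : ℕ) [Fact p.Prime] [CharP F p]
    (G : Type*) [Group G] [Fintype G] (P : Subgroup G) (hP : IsPGroup p P)
    (x : MonoidAlgebra F G)
    (hx : ∀ u ∈ P, MonoidAlgebra.of F G u * x * MonoidAlgebra.of F G u⁻¹ = x) :
    ∑ g : G, x.coeff g = ∑ g ∈ (Set.toFinite ((Subgroup.centralizer (P : Set G) : Subgroup G) : Set G)).toFinset, x.coeff g := by
  classical
  have hX : ∀ u ∈ P, ∀ g : G, x.coeff (u * g * u⁻¹) = x.coeff g := by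
    intro u hu g
    conv_lhs => rw [← hx u hu]
    simp [MonoidAlgebra.of_apply, MonoidAlgebra.mul_single_apply,
      MonoidAlgebra.single_mul_apply, mul_assoc]
  set Q : Subgroup (ConjAct G) := P.map (ConjAct.toConjAct : G ≃* ConjAct G).toMonoidHom with hQdef
  have hQ : IsPGroup p Q := IsPGroup.map hP _
  have hsmul : ∀ (u : Q) (g : G), ∃ w ∈ P, u • g = w * g * w⁻¹ := by
    rintro ⟨v, hv⟩ g
    obtain ⟨w, hw, rfl⟩ := hv
    refine ⟨w, hw, ?_⟩
    show (ConjAct.toConjAct w) • g = w * g * w⁻¹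
    rw [ConjAct.smul_def, ConjAct.ofConjAct_toConjAct]
  have hfQ : ∀ (u : Q) (g : G), x.coeff (u • g) = x.coeff g := by
    intro u g
    obtain ⟨w, hw, hwe⟩ := hsmul u g
    rw [hwe, hX w hw]
  have hfp : MulAction.fixedPoints Q G = ((Subgroup.centralizer (P : Set G) : Subgroup G) : Set G) := by
    ext g
    simp only [MulAction.mem_fixedPoints, SetLike.mem_coe, Subgroup.mem_centralizer_iff]
    constructor
    · intro h w hw
      have hu : ConjAct.toConjAct w ∈ Q := ⟨w, hw, rfl⟩
      have h2 := h ⟨ConjAct.toConjAct w, hu⟩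
      have he : (⟨ConjAct.toConjAct w, hu⟩ : Q) • g = w * g * w⁻¹ := by
        show (ConjAct.toConjAct w) • g = w * g * w⁻¹
        rw [ConjAct.smul_def, ConjAct.ofConjAct_toConjAct]
      rw [he] at h2
      calc w * g = w * g * w⁻¹ * w := by group
      _ = g * w := by rw [h2]
    · intro h u
      obtain ⟨w, hw, hwe⟩ := hsmul u g
      rw [hwe, h w hw]
      group
  rw [aux16 hQ (fun g => x.coeff g) hfQ]
  apply Finset.sum_congr _ (fun _ _ => rfl)
  ext g
  rw [Set.Finite.mem_toFinset, Set.Finite.mem_toFinset, hfp]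
end
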